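/- Let m ≥ 2 be an integer, let s ≥ 4 be an even integer, and let k ≥ 0 be an integer. If (k+1)·s ≤ m + 1 and ∑_{l=0}^{(k+1)·s - 1} (-1)^l · C(m,l) = 0, then (k+1)·s = m + 1. -/

import Mathlib

lemma alt_sum_choose (m : ℕ) (n : ℕ) (hn : 1 ≤ n) :
    ∑ l ∈ Finset.range n, (-1 : ℤ) ^ l * ((m+1).choose l : ℤ)
      = (-1 : ℤ) ^ (n - 1) * (m.choose (n-1) : ℤ) := by
  induction n with
  | zero => omega
  | succ n ih =>
    rcases Nat.eq_or_lt_of_le hn with h | h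
    · simp [← h]
    · have hn1 : 1 ≤ n := by omega
      rw [Finset.sum_range_succ, ih hn1]
      have hn' : n - 1 + 1 = n := by omega
      have hps : (m+1).choose n = m.choose (n-1) + m.choose n := by
        conv_lhs => rw [← hn']
        rw [Nat.choose_succ_succ]; simp [Nat.succ_eq_add_one, hn']
      have hpow : (-1 : ℤ) ^ n = -(-1 : ℤ) ^ (n - 1) := by
        conv_lhs => rw [← hn']
        rw [pow_succ]; ring
      simp only [Nat.add_sub_cancel, hps, Nat.cast_add]
      rw [hpow]; ring

/-- Let `m ≥ 2`, let `s ≥ 4` be even, and `k ≥ 0`. If `(k+1)·s ≤ m + 1` and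
`∑_{l=0}^{(k+1)·s - 1} (-1)^l * C(m,l) = 0`, then `(k+1)·s = m + 1`. -/
theorem alternating_sum_vanishing_forces_equality (m s k : ℕ) (hm : 2 ≤ m) (hs : 4 ≤ s)
    (hse : Even s) (hle : (k + 1) * s ≤ m + 1)
    (hsum : ∑ l ∈ Finset.range ((k + 1) * s), (-1 : ℤ) ^ l * (m.choose l : ℤ) = 0) :
    (k + 1) * s = m + 1 := by
  set n := (k+1)*s with hn
  have hn1 : 1 ≤ n := by have : 4 ≤ n := le_trans hs (Nat.le_mul_of_pos_left s (by omega)); omega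
  have hm1 : m = (m-1) + 1 := by omega
  rw [hm1] at hsum
  rw [alt_sum_choose (m-1) n hn1] at hsum
  have hc : ((m-1).choose (n-1) : ℤ) = 0 := by
    rcases mul_eq_zero.mp hsum with h | h
    · exact absurd h (pow_ne_zero _ (by norm_num))
    · exact h
  have : (m-1).choose (n-1) = 0 := by exact_mod_cast hc
  have := Nat.choose_eq_zero_iff.mp this  -- wrong name maybe
  omega
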